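/- (Subdifferential of the largest eigenvalue.) For every n×n real symmetric matrix A, the set of symmetric matrices M such that λmax(B) ≥ λmax(A) + tr(M (B − A)) for all n×n real symmetric matrices B equals the convex hull of { z zᵀ : z ∈ ℝⁿ, ‖z‖ = 1, zᵀ A z = λmax(A) }. -/

import Mathlib

open Matrix

lemma trace_vecMulVec_mul {n : ℕ} (z : Fin n → ℝ) (C : Matrix (Fin n) (Fin n) ℝ) :
    Matrix.trace (Matrix.vecMulVec z z * C) = z ⬝ᵥ C.mulVec z := by
  simp only [Matrix.trace, Matrix.diag, Matrix.mul_apply, Matrix.vecMulVec_apply,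
    dotProduct, Matrix.mulVec, Finset.mul_sum]
  rw [Finset.sum_comm]
  congr 1; ext i; congr 1; ext j; ring

lemma spectral_decomp {n : ℕ} {M : Matrix (Fin n) (Fin n) ℝ} (hH : M.IsHermitian) :
    M = ∑ k, hH.eigenvalues k •
      Matrix.vecMulVec (fun j => hH.eigenvectorBasis k j) (fun j => hH.eigenvectorBasis k j) := by
  nth_rw 1 [hH.spectral_theorem]
  ext i j
  simp only [Unitary.conjStarAlgAut_apply, Matrix.mul_apply, Matrix.diagonal_apply, Function.comp_apply, RCLike.ofReal_real_eq_id,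
    id_eq, Matrix.star_apply, star_trivial, Matrix.sum_apply, Matrix.smul_apply,
    Matrix.vecMulVec_apply, smul_eq_mul, Matrix.IsHermitian.eigenvectorUnitary_apply,
    mul_ite, ite_mul, zero_mul, mul_zero, Finset.sum_ite_eq, Finset.sum_ite_eq',
    Finset.mem_univ, if_true, Finset.sum_mul]
  congr 1; ext k
  ring

/-- Subdifferential of the largest eigenvalue: the subdifferential of the
convex function λmax at a symmetric matrix `A` equals the convex hull of the rank-one
matrices `z zᵀ` built from unit maximizing vectors. -/
theorem stmt_10 {n : ℕ} (hn : 0 < n)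
    (lmax : Matrix (Fin n) (Fin n) ℝ → ℝ)
    (hlmax : ∀ A : Matrix (Fin n) (Fin n) ℝ, A.IsSymm →
      IsGreatest {r : ℝ | ∃ z : Fin n → ℝ, (∑ i, z i ^ 2) = 1 ∧ r = z ⬝ᵥ A.mulVec z}
        (lmax A))
    (A : Matrix (Fin n) (Fin n) ℝ) (hA : A.IsSymm) :
    {M : Matrix (Fin n) (Fin n) ℝ | M.IsSymm ∧
        ∀ B : Matrix (Fin n) (Fin n) ℝ, B.IsSymm →
          lmax A + Matrix.trace (M * (B - A)) ≤ lmax B}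
      = convexHull ℝ {M : Matrix (Fin n) (Fin n) ℝ |
          ∃ z : Fin n → ℝ, (∑ i, z i ^ 2) = 1 ∧ z ⬝ᵥ A.mulVec z = lmax A ∧
            M = Matrix.vecMulVec z z} := by
  classical
  have hub : ∀ B : Matrix (Fin n) (Fin n) ℝ, B.IsSymm → ∀ z : Fin n → ℝ,
      (∑ i, z i ^ 2) = 1 → z ⬝ᵥ B.mulVec z ≤ lmax B :=
    fun B hB z hz => (hlmax B hB).2 ⟨z, hz, rfl⟩
  apply Set.Subset.antisymm
  · -- hard direction
    intro M hM
    obtain ⟨hMs, hMsub⟩ := hM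
    have lshift : ∀ t : ℝ, lmax (A + t • 1) = lmax A + t := by
      intro t
      have hsym : (A + t • 1).IsSymm := by
        simp [Matrix.IsSymm, Matrix.transpose_add, Matrix.transpose_smul, hA.eq]
      have key : ∀ z : Fin n → ℝ, (∑ i, z i ^ 2) = 1 →
          z ⬝ᵥ (A + t • 1).mulVec z = z ⬝ᵥ A.mulVec z + t := by
        intro z hz
        rw [Matrix.add_mulVec, dotProduct_add, Matrix.smul_mulVec, Matrix.one_mulVec,
          dotProduct_smul]
        congr 1
        simp only [smul_eq_mul, dotProduct]
        rw [show (∑ i, z i * z i) = ∑ i, z i ^ 2 by congr 1; ext i; ring, hz, mul_one]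
      apply le_antisymm
      · obtain ⟨z, hz, hze⟩ := (hlmax _ hsym).1
        rw [hze, key z hz]
        have := hub A hA z hz
        linarith
      · obtain ⟨z, hz, hze⟩ := (hlmax A hA).1
        have : lmax A + t = z ⬝ᵥ (A + t • 1).mulVec z := by rw [key z hz, hze]
        rw [this]
        exact hub _ hsym z hz
    have htr : Matrix.trace M = 1 := by
      have e1 := hMsub (A + (1:ℝ) • 1) (by
        simp [Matrix.IsSymm, Matrix.transpose_add, Matrix.transpose_smul, hA.eq])
      have e2 := hMsub (A + (-1:ℝ) • 1) (by
        simp [Matrix.IsSymm, Matrix.transpose_add, Matrix.transpose_smul, hA.eq])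
      rw [lshift 1] at e1
      rw [lshift (-1)] at e2
      have s1 : A + (1:ℝ) • 1 - A = (1:ℝ) • (1 : Matrix (Fin n) (Fin n) ℝ) := by abel
      have s2 : A + (-1:ℝ) • 1 - A = (-1:ℝ) • (1 : Matrix (Fin n) (Fin n) ℝ) := by abel
      rw [s1] at e1; rw [s2] at e2
      rw [Matrix.mul_smul, Matrix.mul_one, Matrix.trace_smul] at e1 e2
      simp only [smul_eq_mul, one_mul, neg_one_mul] at e1 e2
      linarith
    have hpsd : ∀ w : Fin n → ℝ, 0 ≤ w ⬝ᵥ M.mulVec w := by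
      intro w
      have hsymB : (A - Matrix.vecMulVec w w).IsSymm := by
        refine Matrix.IsSymm.sub hA ?_
        ext i j
        simp [Matrix.vecMulVec_apply, mul_comm]
      have hle : lmax (A - Matrix.vecMulVec w w) ≤ lmax A := by
        obtain ⟨z, hz, hze⟩ := (hlmax _ hsymB).1
        rw [hze]
        have hq : z ⬝ᵥ (A - Matrix.vecMulVec w w).mulVec z
            = z ⬝ᵥ A.mulVec z - (w ⬝ᵥ z) * (w ⬝ᵥ z) := by
          rw [Matrix.sub_mulVec, dotProduct_sub]
          congr 1
          simp only [Matrix.mulVec, dotProduct, Matrix.vecMulVec_apply, Finset.mul_sum,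
            Finset.sum_mul]
          congr 1; ext i; congr 1; ext j; ring
        rw [hq]
        have := hub A hA z hz
        nlinarith [mul_self_nonneg (w ⬝ᵥ z)]
      have e := hMsub _ hsymB
      have s : A - Matrix.vecMulVec w w - A = -(Matrix.vecMulVec w w) := by abel
      rw [s, Matrix.mul_neg, Matrix.trace_neg] at e
      have h0 : 0 ≤ Matrix.trace (M * Matrix.vecMulVec w w) := by linarith
      rwa [Matrix.trace_mul_comm, trace_vecMulVec_mul] at h0
    have htra : Matrix.trace (M * A) = lmax A := by
      have hzero : lmax 0 = 0 := by
        obtain ⟨z, hz, hze⟩ := (hlmax 0 (by simp [Matrix.IsSymm])).1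
        simpa using hze
      have e0 := hMsub 0 (by simp [Matrix.IsSymm])
      rw [hzero, zero_sub, Matrix.mul_neg, Matrix.trace_neg] at e0
      have hAA : (A + A).IsSymm := by simp [Matrix.IsSymm, Matrix.transpose_add, hA.eq]
      have ldouble : lmax (A + A) = 2 * lmax A := by
        apply le_antisymm
        · obtain ⟨z, hz, hze⟩ := (hlmax _ hAA).1
          rw [hze, Matrix.add_mulVec, dotProduct_add]
          have := hub A hA z hz
          linarith
        · obtain ⟨z, hz, hze⟩ := (hlmax A hA).1
          have h2 : 2 * lmax A = z ⬝ᵥ (A + A).mulVec z := by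
            rw [Matrix.add_mulVec, dotProduct_add, ← hze]; ring
          rw [h2]
          exact hub _ hAA z hz
      have e1 := hMsub (A + A) hAA
      rw [ldouble] at e1
      have s : A + A - A = A := by abel
      rw [s] at e1
      linarith
    -- spectral decomposition
    have hH : M.IsHermitian := by
      rw [Matrix.IsHermitian]
      ext i j
      rw [Matrix.conjTranspose_apply, star_trivial]
      exact congrFun (congrFun hMs i) j
    set μ : Fin n → ℝ := hH.eigenvalues with hμ
    set v : Fin n → Fin n → ℝ := fun k j => hH.eigenvectorBasis k j with hv
    have hdecomp : M = ∑ k, μ k • Matrix.vecMulVec (v k) (v k) := spectral_decomp hH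
    have hunit : ∀ k, (∑ j, v k j ^ 2) = 1 := by
      intro k
      have h1 := hH.eigenvectorBasis.orthonormal.1 k
      have h2 : (inner ℝ (hH.eigenvectorBasis k) (hH.eigenvectorBasis k) : ℝ) = 1 := by
        rw [real_inner_self_eq_norm_sq, h1]; norm_num
      rw [PiLp.inner_apply] at h2
      simp only [RCLike.inner_apply, conj_trivial] at h2
      rw [← h2]
      congr 1; ext j; rw [sq]
    have hμnn : ∀ k, 0 ≤ μ k := by
      intro k
      have h1 := hH.eigenvalues_eq k
      have h2 : μ k = v k ⬝ᵥ M.mulVec (v k) := by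
        rw [hμ, h1]
        simp only [RCLike.re_to_real]
        rfl
      rw [h2]
      exact hpsd (v k)
    have hμsum : (∑ k, μ k) = 1 := by
      have ht2 : Matrix.trace M = ∑ k, μ k := by
        conv_lhs => rw [hdecomp]
        rw [Matrix.trace_sum]
        congr 1; ext k
        rw [Matrix.trace_smul, smul_eq_mul]
        have h3 : Matrix.trace (Matrix.vecMulVec (v k) (v k)) = ∑ j, v k j ^ 2 := by
          simp [Matrix.trace, Matrix.diag, Matrix.vecMulVec_apply, sq]
        rw [h3, hunit k, mul_one]
      rw [← ht2, htr]
    have htraq : (∑ k, μ k * (v k ⬝ᵥ A.mulVec (v k))) = lmax A := by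
      have h4 : Matrix.trace (M * A) = ∑ k, μ k * (v k ⬝ᵥ A.mulVec (v k)) := by
        conv_lhs => rw [hdecomp]
        rw [Finset.sum_mul, Matrix.trace_sum]
        congr 1; ext k
        rw [Matrix.smul_mul, Matrix.trace_smul, trace_vecMulVec_mul, smul_eq_mul]
      rw [← h4, htra]
    have hqle : ∀ k, v k ⬝ᵥ A.mulVec (v k) ≤ lmax A := fun k => hub A hA (v k) (hunit k)
    have hsum0 : (∑ k, μ k * (lmax A - v k ⬝ᵥ A.mulVec (v k))) = 0 := by
      have : (∑ k, μ k * (lmax A - v k ⬝ᵥ A.mulVec (v k)))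
          = (∑ k, μ k) * lmax A - ∑ k, μ k * (v k ⬝ᵥ A.mulVec (v k)) := by
        rw [Finset.sum_mul, ← Finset.sum_sub_distrib]
        congr 1; ext k; ring
      rw [this, hμsum, htraq, one_mul, sub_self]
    have hq : ∀ k, μ k ≠ 0 → v k ⬝ᵥ A.mulVec (v k) = lmax A := by
      intro k hk
      have h5 := (Finset.sum_eq_zero_iff_of_nonneg (fun k _ =>
        mul_nonneg (hμnn k) (by linarith [hqle k]))).mp hsum0 k (Finset.mem_univ k)
      rcases mul_eq_zero.mp h5 with h | h
      · exact absurd h hk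
      · linarith
    set t : Finset (Fin n) := Finset.univ.filter (fun k => μ k ≠ 0) with ht
    have hsum_t : (∑ k ∈ t, μ k) = 1 := by
      rw [← hμsum]
      apply Finset.sum_subset (Finset.subset_univ t)
      intro x _ hx
      simp only [ht, Finset.mem_filter, Finset.mem_univ, true_and, not_not] at hx
      exact hx
    have hdect : M = ∑ k ∈ t, μ k • Matrix.vecMulVec (v k) (v k) := by
      rw [hdecomp]
      symm
      apply Finset.sum_subset (Finset.subset_univ t)
      intro x _ hx
      simp only [ht, Finset.mem_filter, Finset.mem_univ, true_and, not_not] at hx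
      rw [hx, zero_smul]
    rw [hdect, ← Finset.centerMass_eq_of_sum_1 _ _ hsum_t]
    refine Finset.centerMass_mem_convexHull t (fun i _ => hμnn i) (by rw [hsum_t]; norm_num) ?_
    intro i hi
    refine ⟨v i, hunit i, hq i ?_, rfl⟩
    simpa [ht] using hi
  · -- easy direction
    apply convexHull_min
    · rintro M ⟨z, hz, hzA, rfl⟩
      constructor
      · ext i j; simp [Matrix.vecMulVec_apply, mul_comm]
      · intro B hB
        rw [trace_vecMulVec_mul, Matrix.sub_mulVec, dotProduct_sub, hzA]
        have := hub B hB z hz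
        linarith
    · rintro M1 ⟨hM1s, hM1⟩ M2 ⟨hM2s, hM2⟩ a b ha hb hab
      constructor
      · simp only [Matrix.IsSymm, Matrix.transpose_add, Matrix.transpose_smul, hM1s.eq, hM2s.eq]
      · intro B hB
        have e1 := hM1 B hB
        have e2 := hM2 B hB
        have h6 : Matrix.trace ((a • M1 + b • M2) * (B - A))
            = a * Matrix.trace (M1 * (B - A)) + b * Matrix.trace (M2 * (B - A)) := by
          rw [Matrix.add_mul, Matrix.smul_mul, Matrix.smul_mul, Matrix.trace_add,
            Matrix.trace_smul, Matrix.trace_smul]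
          simp
        rw [h6]
        have f1 := mul_le_mul_of_nonneg_left e1 ha
        have f2 := mul_le_mul_of_nonneg_left e2 hb
        have g1 : a * lmax B + b * lmax B = lmax B := by rw [← add_mul, hab, one_mul]
        have g2 : a * lmax A + b * lmax A = lmax A := by rw [← add_mul, hab, one_mul]
        nlinarith [f1, f2, g1, g2]
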